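/- Let 1 ≤ p < ∞, let ρ : [0,1] → ℝ be bounded and measurable, and let y ∈ (0,1). Then ‖ρ − H_y(ρ)‖_p ≤ 2 (1 − y)^{−1/p} τ(ρ, y)_p. (Theorem 4.1, estimate for H_y.) -/

import Mathlib

open MeasureTheory Set Real

/-- Local modulus of continuity of `ρ` at `x` with radius `δ`, relative to `[0,1]`. -/
noncomputable def omegaMod (ρ : ℝ → ℝ) (x δ : ℝ) : ℝ :=
  sSup {d : ℝ | ∃ u ∈ Icc (x - δ) (x + δ) ∩ Icc (0:ℝ) 1,
    ∃ v ∈ Icc (x - δ) (x + δ) ∩ Icc (0:ℝ) 1, d = |ρ u - ρ v|}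

/-- One-sided operator `G_y`. -/
noncomputable def Gop (y : ℝ) (ρ : ℝ → ℝ) (x : ℝ) : ℝ :=
  ∫ t in (0:ℝ)..1, (ρ ((1 - y) * x + y * t) - omegaMod ρ ((1 - y) * x + y * t) y)

/-- One-sided operator `H_y`. -/
noncomputable def Hop (y : ℝ) (ρ : ℝ → ℝ) (x : ℝ) : ℝ :=
  ∫ t in (0:ℝ)..1, (ρ ((1 - y) * x + y * t) + omegaMod ρ ((1 - y) * x + y * t) y)

/-- `L^p` norm on `[0,1]`. -/
noncomputable def lpNorm (p : ℝ) (f : ℝ → ℝ) : ℝ :=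
  (∫ x in (0:ℝ)..1, |f x| ^ p) ^ (1 / p)

/-- Averaged modulus of smoothness `τ(ρ, δ)_p`. -/
noncomputable def tau (p : ℝ) (ρ : ℝ → ℝ) (δ : ℝ) : ℝ :=
  lpNorm p (fun x => omegaMod ρ x δ)

/-- The step function `Φ`. -/
noncomputable def stepPhi (x : ℝ) : ℝ := if 0 < x then 1 else 0

/-- Operator `M_k` built from polynomials `P ≤ Φ ≤ Q`, applied to `f` with
`f x = f 0 + ∫_0^x g`. -/
noncomputable def Mop (P Q : Polynomial ℝ) (f0 : ℝ) (g : ℝ → ℝ) (x : ℝ) : ℝ :=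
  f0 + (∫ t in (0:ℝ)..1, P.eval (x - t) * max (g t) 0)
     - ∫ t in (0:ℝ)..1, Q.eval (x - t) * max (-g t) 0

/-- Operator `N_k` built from polynomials `P ≤ Φ ≤ Q`, applied to `f` with
`f x = f 0 + ∫_0^x g`. -/
noncomputable def Nop (P Q : Polynomial ℝ) (f0 : ℝ) (g : ℝ → ℝ) (x : ℝ) : ℝ :=
  f0 + (∫ t in (0:ℝ)..1, Q.eval (x - t) * max (g t) 0)
     - ∫ t in (0:ℝ)..1, P.eval (x - t) * max (-g t) 0

/-- Degree of best one-sided approximation by polynomials of degree at most `k`. -/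
noncomputable def bestE (p : ℝ) (k : ℕ) (ρ : ℝ → ℝ) : ℝ :=
  sInf {c : ℝ | ∃ P Q : Polynomial ℝ, P.natDegree ≤ k ∧ Q.natDegree ≤ k ∧
    (∀ x ∈ Icc (0:ℝ) 1, P.eval x ≤ ρ x ∧ ρ x ≤ Q.eval x) ∧
    c = lpNorm p (fun x => Q.eval x - P.eval x)}

section Stmt7Aux


variable {ρ : ℝ → ℝ} {M y : ℝ}

lemma aux_bddAbove (hM : ∀ x ∈ Icc (0:ℝ) 1, |ρ x| ≤ M) (s : ℝ) :
    BddAbove {d : ℝ | ∃ u ∈ Icc (s - y) (s + y) ∩ Icc (0:ℝ) 1,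
      ∃ v ∈ Icc (s - y) (s + y) ∩ Icc (0:ℝ) 1, d = |ρ u - ρ v|} := by
  refine ⟨2 * M, ?_⟩
  rintro d ⟨u, ⟨-, hu⟩, v, ⟨-, hv⟩, rfl⟩
  calc |ρ u - ρ v| ≤ |ρ u| + |ρ v| := abs_sub _ _
    _ ≤ M + M := add_le_add (hM u hu) (hM v hv)
    _ = 2 * M := by ring

lemma aux_mem_self (hy : 0 ≤ y) {s : ℝ} (hs : s ∈ Icc (0:ℝ) 1) :
    s ∈ Icc (s - y) (s + y) ∩ Icc (0:ℝ) 1 :=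
  ⟨⟨by linarith [hs.1], by linarith [hs.2]⟩, hs⟩

lemma aux_omega_nonneg (hM : ∀ x ∈ Icc (0:ℝ) 1, |ρ x| ≤ M) (hy : 0 ≤ y)
    {s : ℝ} (hs : s ∈ Icc (0:ℝ) 1) : 0 ≤ omegaMod ρ s y :=
  le_csSup (aux_bddAbove hM s)
    ⟨s, aux_mem_self hy hs, s, aux_mem_self hy hs, by simp⟩

lemma aux_abs_le_omega (hM : ∀ x ∈ Icc (0:ℝ) 1, |ρ x| ≤ M)
    {s u v : ℝ} (hu : u ∈ Icc (s - y) (s + y) ∩ Icc (0:ℝ) 1)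
    (hv : v ∈ Icc (s - y) (s + y) ∩ Icc (0:ℝ) 1) :
    |ρ u - ρ v| ≤ omegaMod ρ s y :=
  le_csSup (aux_bddAbove hM s) ⟨u, hu, v, hv, rfl⟩

lemma aux_omega_le (hM : ∀ x ∈ Icc (0:ℝ) 1, |ρ x| ≤ M) (hy : 0 ≤ y)
    {s : ℝ} (hs : s ∈ Icc (0:ℝ) 1) : omegaMod ρ s y ≤ 2 * M := by
  refine csSup_le ⟨0, s, aux_mem_self hy hs, s, aux_mem_self hy hs, by simp⟩ ?_
  rintro d ⟨u, ⟨-, hu⟩, v, ⟨-, hv⟩, rfl⟩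
  calc |ρ u - ρ v| ≤ |ρ u| + |ρ v| := abs_sub _ _
    _ ≤ M + M := add_le_add (hM u hu) (hM v hv)
    _ = 2 * M := by ring

def Tset (y : ℝ) (E : Set ℝ) : Set ℝ :=
  (⋃ u ∈ E, Ioo (u - y) (u + y)) ∪ ((· + y) ⁻¹' E) ∪ ((· - y) ⁻¹' E)

lemma mem_Tset {y : ℝ} (hy : 0 < y) {E : Set ℝ} {s : ℝ} :
    s ∈ Tset y E ↔ ∃ u ∈ E, |s - u| ≤ y := by
  constructor
  · rintro ((h | h) | h)
    · rcases mem_iUnion₂.1 h with ⟨u, hu, h1, h2⟩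
      exact ⟨u, hu, abs_le.2 ⟨by linarith, by linarith⟩⟩
    · exact ⟨s + y, h, by rw [abs_le]; constructor <;> linarith⟩
    · exact ⟨s - y, h, by rw [abs_le]; constructor <;> linarith⟩
  · rintro ⟨u, hu, h⟩
    rw [abs_le] at h
    rcases lt_or_eq_of_le h.1 with h1 | h1
    · rcases lt_or_eq_of_le h.2 with h2 | h2
      · exact Or.inl (Or.inl (mem_iUnion₂.2 ⟨u, hu, by constructor <;> linarith⟩))
      · exact Or.inr (by simp only [mem_preimage, show s - y = u by linarith]; exact hu)
    · exact Or.inl (Or.inr (by simp only [mem_preimage, show s + y = u by linarith]; exact hu))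

lemma Tset_measurable {y : ℝ} {E : Set ℝ} (hE : MeasurableSet E) :
    MeasurableSet (Tset y E) :=
  (((isOpen_biUnion fun _ _ => isOpen_Ioo).measurableSet.union
    (hE.preimage (measurable_id.add_const y))).union
    (hE.preimage (measurable_id.sub_const y)))

lemma aux_mem_K_iff {s u : ℝ} :
    u ∈ Icc (s - y) (s + y) ∩ Icc (0:ℝ) 1 ↔ (u ∈ Icc (0:ℝ) 1 ∧ |s - u| ≤ y) := by
  rw [mem_inter_iff, mem_Icc, abs_sub_comm, abs_le]
  constructor
  · rintro ⟨⟨h1, h2⟩, h3⟩; exact ⟨h3, by linarith, by linarith⟩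
  · rintro ⟨h3, h1, h2⟩; exact ⟨⟨by linarith, by linarith⟩, h3⟩

lemma aux_super (hM : ∀ x ∈ Icc (0:ℝ) 1, |ρ x| ≤ M) (hy : 0 < y)
    {s : ℝ} (hs : s ∈ Icc (0:ℝ) 1) {c : ℝ} :
    c < omegaMod ρ s y ↔ ∃ q : ℚ,
      s ∈ Tset y {u ∈ Icc (0:ℝ) 1 | (q:ℝ) + c < ρ u} ∩
          Tset y {u ∈ Icc (0:ℝ) 1 | ρ u < (q:ℝ)} := by
  constructor
  · intro h
    obtain ⟨d, ⟨u, hu, v, hv, rfl⟩, hd⟩ :=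
      exists_lt_of_lt_csSup
        (by exact ⟨0, s, aux_mem_self hy.le hs, s, aux_mem_self hy.le hs, by simp⟩) h
    rw [aux_mem_K_iff] at hu hv
    rcases lt_abs.1 hd with h' | h'
    · obtain ⟨q, hq1, hq2⟩ := exists_rat_btwn (show ρ v < ρ u - c by linarith)
      exact ⟨q, (mem_Tset hy).2 ⟨u, ⟨hu.1, by linarith⟩, hu.2⟩,
        (mem_Tset hy).2 ⟨v, ⟨hv.1, hq1⟩, hv.2⟩⟩
    · obtain ⟨q, hq1, hq2⟩ := exists_rat_btwn (show ρ u < ρ v - c by linarith)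
      exact ⟨q, (mem_Tset hy).2 ⟨v, ⟨hv.1, by linarith⟩, hv.2⟩,
        (mem_Tset hy).2 ⟨u, ⟨hu.1, hq1⟩, hu.2⟩⟩
  · rintro ⟨q, h1, h2⟩
    obtain ⟨u, ⟨hu1, hu2⟩, hu3⟩ := (mem_Tset hy).1 h1
    obtain ⟨v, ⟨hv1, hv2⟩, hv3⟩ := (mem_Tset hy).1 h2
    calc c < ρ u - ρ v := by linarith
      _ ≤ |ρ u - ρ v| := le_abs_self _
      _ ≤ omegaMod ρ s y :=
        aux_abs_le_omega hM (aux_mem_K_iff.2 ⟨hu1, hu3⟩) (aux_mem_K_iff.2 ⟨hv1, hv3⟩)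

lemma aux_omega0_measurable (hmeas : Measurable ρ)
    (hM : ∀ x ∈ Icc (0:ℝ) 1, |ρ x| ≤ M) (hy : 0 < y) :
    Measurable (fun s => if s ∈ Icc (0:ℝ) 1 then omegaMod ρ s y else 0) := by
  apply measurable_of_Ioi
  intro c
  rcases lt_or_ge c 0 with hc | hc
  · convert MeasurableSet.univ
    ext s
    simp only [mem_preimage, mem_Ioi, mem_univ, iff_true]
    split
    · exact lt_of_lt_of_le hc (aux_omega_nonneg hM hy.le ‹_›)
    · exact hc
  · have : (fun s => if s ∈ Icc (0:ℝ) 1 then omegaMod ρ s y else 0) ⁻¹' Ioi c =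
        Icc (0:ℝ) 1 ∩ ⋃ q : ℚ,
          (Tset y {u ∈ Icc (0:ℝ) 1 | (q:ℝ) + c < ρ u} ∩
           Tset y {u ∈ Icc (0:ℝ) 1 | ρ u < (q:ℝ)}) := by
      ext s
      simp only [mem_preimage, mem_Ioi, mem_inter_iff, mem_iUnion]
      by_cases hs : s ∈ Icc (0:ℝ) 1
      · simp only [hs, if_pos, true_and]
        exact aux_super hM hy hs
      · simp only [hs, if_neg, not_false_iff, false_and, iff_false, not_lt]
        simpa using hc
    rw [this]
    refine measurableSet_Icc.inter (MeasurableSet.iUnion fun q => ?_)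
    exact (Tset_measurable (measurableSet_Icc.inter (hmeas measurableSet_Ioi))).inter
      (Tset_measurable (measurableSet_Icc.inter (hmeas measurableSet_Iio)))

lemma aux_intervalIntegrable {f : ℝ → ℝ} (hm : Measurable f) {C : ℝ}
    (hC : ∀ x, |f x| ≤ C) (a b : ℝ) : IntervalIntegrable f volume a b := by
  rw [intervalIntegrable_iff]
  exact Measure.integrableOn_of_bounded measure_Ioc_lt_top.ne hm.aestronglyMeasurable
    (Filter.Eventually.of_forall fun x => by rw [Real.norm_eq_abs]; exact hC x)

lemma aux_subst {f : ℝ → ℝ} (hf : ∀ a b, IntervalIntegrable f volume a b)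
    {c : ℝ} (hc : c ≠ 0) (d : ℝ) :
    (∫ t in (0:ℝ)..1, f (c * t + d)) =
      c⁻¹ * ((∫ u in (0:ℝ)..(c + d), f u) - ∫ u in (0:ℝ)..d, f u) := by
  have h1 : c * 0 + d = d := by ring
  have h2 : c * 1 + d = c + d := by ring
  rw [intervalIntegral.integral_comp_mul_add f hc d, h1, h2,
    intervalIntegral.integral_interval_sub_left (hf 0 (c + d)) (hf 0 d), smul_eq_mul]

end Stmt7Aux

/-- Theorem 4.1, estimate for `H_y`. -/
theorem stmt7 (p : ℝ) (hp : 1 ≤ p) (ρ : ℝ → ℝ) (hmeas : Measurable ρ)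
    (hbdd : ∃ M : ℝ, ∀ x ∈ Icc (0:ℝ) 1, |ρ x| ≤ M)
    (y : ℝ) (hy : y ∈ Ioo (0:ℝ) 1) :
    lpNorm p (fun x => ρ x - Hop y ρ x) ≤
      2 * (1 - y) ^ (-(1 / p) : ℝ) * tau p ρ y := by
  obtain ⟨hy0, hy1⟩ := hy
  obtain ⟨M, hM⟩ := hbdd
  have hM0 : 0 ≤ M := le_trans (abs_nonneg _) (hM 0 (by norm_num))
  have hp0 : (0:ℝ) < p := lt_of_lt_of_le one_pos hp
  have h1y : (0:ℝ) < 1 - y := by linarith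
  -- globally defined bounded measurable versions
  set ω₀ : ℝ → ℝ := fun s => if s ∈ Icc (0:ℝ) 1 then omegaMod ρ s y else 0 with hω₀def
  set ρ₀ : ℝ → ℝ := fun s => if s ∈ Icc (0:ℝ) 1 then ρ s else 0 with hρ₀def
  have hω₀meas : Measurable ω₀ := aux_omega0_measurable hmeas hM hy0
  have hρ₀meas : Measurable ρ₀ := Measurable.ite measurableSet_Icc hmeas measurable_const
  have hω₀nonneg : ∀ s, 0 ≤ ω₀ s := by
    intro s
    simp only [hω₀def]
    split
    · exact aux_omega_nonneg hM hy0.le ‹_›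
    · exact le_refl 0
  have hω₀le : ∀ s, ω₀ s ≤ 2 * M := by
    intro s
    simp only [hω₀def]
    split
    · exact aux_omega_le hM hy0.le ‹_›
    · linarith
  have hω₀abs : ∀ s, |ω₀ s| ≤ 2 * M := fun s =>
    abs_le.2 ⟨by linarith [hω₀nonneg s], hω₀le s⟩
  have hρ₀abs : ∀ s, |ρ₀ s| ≤ M := by
    intro s
    simp only [hρ₀def]
    split
    · exact hM s ‹_›
    · simpa using hM0
  set F : ℝ → ℝ := fun s => ρ₀ s + ω₀ s with hFdef
  have hFmeas : Measurable F := hρ₀meas.add hω₀meas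
  have hFabs : ∀ s, |F s| ≤ 3 * M := fun s => by
    calc |ρ₀ s + ω₀ s| ≤ |ρ₀ s| + |ω₀ s| := abs_add_le _ _
      _ ≤ M + 2 * M := add_le_add (hρ₀abs s) (hω₀abs s)
      _ = 3 * M := by ring
  have hFint : ∀ a b, IntervalIntegrable F volume a b :=
    aux_intervalIntegrable hFmeas hFabs
  have hωint : ∀ a b, IntervalIntegrable ω₀ volume a b :=
    aux_intervalIntegrable hω₀meas hω₀abs
  set w : ℝ → ℝ := fun s => ω₀ s ^ p with hwdef
  have hwmeas : Measurable w := (Real.continuous_rpow_const hp0.le).measurable.comp hω₀meas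
  have hwnonneg : ∀ s, 0 ≤ w s := fun s => Real.rpow_nonneg (hω₀nonneg s) p
  have hwle : ∀ s, w s ≤ (2*M) ^ p := fun s =>
    Real.rpow_le_rpow (hω₀nonneg s) (hω₀le s) hp0.le
  have hwabs : ∀ s, |w s| ≤ (2*M) ^ p := fun s => abs_le.2
    ⟨le_trans (neg_nonpos.2 (Real.rpow_nonneg (by linarith) p)) (hwnonneg s), hwle s⟩
  have hwint : ∀ a b, IntervalIntegrable w volume a b :=
    aux_intervalIntegrable hwmeas hwabs
  -- primitives
  set Fp : ℝ → ℝ := fun z => ∫ u in (0:ℝ)..z, F u with hFpdef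
  set Wp : ℝ → ℝ := fun z => ∫ u in (0:ℝ)..z, ω₀ u with hWpdef
  set Pp : ℝ → ℝ := fun z => ∫ u in (0:ℝ)..z, w u with hPpdef
  have hFpcont : Continuous Fp := intervalIntegral.continuous_primitive hFint 0
  have hWpcont : Continuous Wp := intervalIntegral.continuous_primitive hωint 0
  have hPpcont : Continuous Pp := intervalIntegral.continuous_primitive hwint 0
  set Φ : ℝ → ℝ := fun x => ρ₀ x - y⁻¹ * (Fp (y + (1-y)*x) - Fp ((1-y)*x)) with hΦdef
  set D : ℝ → ℝ := fun x => y⁻¹ * (Wp (y + (1-y)*x) - Wp ((1-y)*x)) with hDdef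
  set E : ℝ → ℝ := fun x => y⁻¹ * (Pp (y + (1-y)*x) - Pp ((1-y)*x)) with hEdef
  have haff1 : Continuous fun x : ℝ => y + (1-y)*x :=
    continuous_const.add (continuous_const.mul continuous_id)
  have haff2 : Continuous fun x : ℝ => (1-y)*x := continuous_const.mul continuous_id
  have hDcont : Continuous D :=
    continuous_const.mul ((hWpcont.comp haff1).sub (hWpcont.comp haff2))
  have hEcont : Continuous E :=
    continuous_const.mul ((hPpcont.comp haff1).sub (hPpcont.comp haff2))
  have hΦmeas : Measurable Φ :=
    hρ₀meas.sub (measurable_const.mul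
      (((hFpcont.comp haff1).sub (hFpcont.comp haff2)).measurable))
  have hsmem : ∀ x ∈ Icc (0:ℝ) 1, ∀ t ∈ Icc (0:ℝ) 1, y*t + (1-y)*x ∈ Icc (0:ℝ) 1 := by
    rintro x ⟨hx1, hx2⟩ t ⟨ht1, ht2⟩
    constructor
    · nlinarith
    · nlinarith
  have haffmeas : ∀ x : ℝ, Measurable fun t : ℝ => y*t + (1-y)*x := fun x =>
    ((measurable_id.const_mul y).add_const _)
  have hHop : ∀ x ∈ Icc (0:ℝ) 1, Hop y ρ x = ∫ t in (0:ℝ)..1, F (y*t + (1-y)*x) := by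
    intro x hx
    rw [Hop]
    apply intervalIntegral.integral_congr
    intro t ht
    rw [uIcc_of_le zero_le_one] at ht
    have hmem : y*t + (1-y)*x ∈ Icc (0:ℝ) 1 := hsmem x hx t ht
    show ρ ((1-y)*x + y*t) + omegaMod ρ ((1-y)*x + y*t) y = F (y*t + (1-y)*x)
    have harg : (1-y)*x + y*t = y*t + (1-y)*x := by ring
    rw [harg, hFdef]
    simp only [hρ₀def, hω₀def, if_pos hmem]
  have hΦeq : ∀ x ∈ Icc (0:ℝ) 1, Φ x = ρ x - Hop y ρ x := by
    intro x hx
    rw [hHop x hx, aux_subst hFint hy0.ne' ((1-y)*x), hΦdef]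
    simp only [hρ₀def, if_pos hx, hFpdef]
  have hstepA : ∀ x ∈ Icc (0:ℝ) 1, |Φ x| ≤ 2 * D x := by
    intro x hx
    have hD : D x = ∫ t in (0:ℝ)..1, ω₀ (y*t + (1-y)*x) := by
      rw [aux_subst hωint hy0.ne' ((1-y)*x), hDdef]
    have hint2 : IntervalIntegrable (fun t => F (y*t + (1-y)*x)) volume 0 1 :=
      aux_intervalIntegrable (hFmeas.comp (haffmeas x)) (fun t => hFabs _) 0 1
    have key : ∀ t ∈ Icc (0:ℝ) 1, |ρ x - F (y*t + (1-y)*x)| ≤ 2 * ω₀ (y*t + (1-y)*x) := by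
      intro t ht
      have hs : y*t + (1-y)*x ∈ Icc (0:ℝ) 1 := hsmem x hx t ht
      have hdist : |(y*t + (1-y)*x) - x| ≤ y := by
        have h1 : (y*t + (1-y)*x) - x = y * (t - x) := by ring
        rw [h1, abs_mul, abs_of_pos hy0]
        have : |t - x| ≤ 1 := by
          rw [abs_le]
          constructor
          · linarith [ht.1, hx.2]
          · linarith [ht.2, hx.1]
        nlinarith
      have habs : |ρ x - ρ (y*t + (1-y)*x)| ≤ omegaMod ρ (y*t + (1-y)*x) y :=
        aux_abs_le_omega hM (aux_mem_K_iff.2 ⟨hx, hdist⟩) (aux_mem_self hy0.le hs)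
      have hFs : F (y*t + (1-y)*x) = ρ (y*t + (1-y)*x) + ω₀ (y*t + (1-y)*x) := by
        rw [hFdef]
        simp only [hρ₀def, if_pos hs]
      have hωs : ω₀ (y*t + (1-y)*x) = omegaMod ρ (y*t + (1-y)*x) y := by
        simp only [hω₀def, if_pos hs]
      rw [hFs]
      have h2 : |ρ x - (ρ (y*t + (1-y)*x) + ω₀ (y*t + (1-y)*x))|
          ≤ |ρ x - ρ (y*t + (1-y)*x)| + |ω₀ (y*t + (1-y)*x)| := by
        have : ρ x - (ρ (y*t + (1-y)*x) + ω₀ (y*t + (1-y)*x))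
            = (ρ x - ρ (y*t + (1-y)*x)) - ω₀ (y*t + (1-y)*x) := by ring
        rw [this]
        exact abs_sub _ _
      rw [abs_of_nonneg (hω₀nonneg _)] at h2
      rw [← hωs] at habs
      linarith
    rw [hΦeq x hx, hHop x hx]
    have heq1 : ρ x - ∫ t in (0:ℝ)..1, F (y*t + (1-y)*x)
        = ∫ t in (0:ℝ)..1, (ρ x - F (y*t + (1-y)*x)) := by
      rw [intervalIntegral.integral_sub intervalIntegrable_const hint2,
        intervalIntegral.integral_const]
      norm_num
    rw [heq1]
    calc |∫ t in (0:ℝ)..1, (ρ x - F (y*t + (1-y)*x))|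
        ≤ ∫ t in (0:ℝ)..1, |ρ x - F (y*t + (1-y)*x)| :=
          intervalIntegral.abs_integral_le_integral_abs zero_le_one
      _ ≤ ∫ t in (0:ℝ)..1, 2 * ω₀ (y*t + (1-y)*x) := by
          apply intervalIntegral.integral_mono_on zero_le_one
            (intervalIntegrable_const.sub hint2).abs
            ((aux_intervalIntegrable (hω₀meas.comp (haffmeas x))
              (fun t => hω₀abs _) 0 1).const_mul 2)
          exact key
      _ = 2 * D x := by
          rw [hD, ← intervalIntegral.integral_const_mul]
  -- global bounds for Φ and D
  have hFpdiff : ∀ x : ℝ, Fp (y + (1-y)*x) - Fp ((1-y)*x)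
      = ∫ u in ((1-y)*x)..(y + (1-y)*x), F u := fun x =>
    intervalIntegral.integral_interval_sub_left (hFint 0 _) (hFint 0 _)
  have hWpdiff : ∀ x : ℝ, Wp (y + (1-y)*x) - Wp ((1-y)*x)
      = ∫ u in ((1-y)*x)..(y + (1-y)*x), ω₀ u := fun x =>
    intervalIntegral.integral_interval_sub_left (hωint 0 _) (hωint 0 _)
  have hΦabs : ∀ x : ℝ, |Φ x| ≤ 4 * M := by
    intro x
    have h1 : |∫ u in ((1-y)*x)..(y + (1-y)*x), F u| ≤ 3*M * |(y + (1-y)*x) - (1-y)*x| := by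
      have := intervalIntegral.norm_integral_le_of_norm_le_const
        (f := F) (a := (1-y)*x) (b := y + (1-y)*x) (C := 3*M)
        (fun u _ => by rw [Real.norm_eq_abs]; exact hFabs u)
      simpa [Real.norm_eq_abs] using this
    have h2 : (y + (1-y)*x) - (1-y)*x = y := by ring
    rw [h2, abs_of_pos hy0] at h1
    have h3 : |Φ x| ≤ |ρ₀ x| + y⁻¹ * |Fp (y + (1-y)*x) - Fp ((1-y)*x)| := by
      calc |Φ x| ≤ |ρ₀ x| + |y⁻¹ * (Fp (y + (1-y)*x) - Fp ((1-y)*x))| := abs_sub _ _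
        _ = |ρ₀ x| + y⁻¹ * |Fp (y + (1-y)*x) - Fp ((1-y)*x)| := by
            rw [abs_mul, abs_of_pos (inv_pos.2 hy0)]
    rw [hFpdiff x] at h3
    have h4 : y⁻¹ * |∫ u in ((1-y)*x)..(y + (1-y)*x), F u| ≤ y⁻¹ * (3*M*y) :=
      mul_le_mul_of_nonneg_left h1 (inv_pos.2 hy0).le
    have h5 : y⁻¹ * (3*M*y) = 3*M := by field_simp
    have := hρ₀abs x
    linarith
  have hDnonneg : ∀ x : ℝ, 0 ≤ D x := by
    intro x
    rw [hDdef]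
    dsimp only
    rw [hWpdiff x]
    exact mul_nonneg (inv_pos.2 hy0).le
      (intervalIntegral.integral_nonneg (by linarith) (fun u _ => hω₀nonneg u))
  -- Step B
  have hstepB : (∫ x in (0:ℝ)..1, |Φ x| ^ p) ≤ ∫ x in (0:ℝ)..1, (2 * D x) ^ p := by
    refine intervalIntegral.integral_mono_on zero_le_one ?_ ?_
      (fun x hx => Real.rpow_le_rpow (abs_nonneg _) (hstepA x hx) hp0.le)
    · refine aux_intervalIntegrable
        ((Real.continuous_rpow_const hp0.le).measurable.comp hΦmeas.abs)
        (C := (4*M) ^ p) (fun x => ?_) 0 1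
      show abs (|Φ x| ^ p) ≤ (4*M) ^ p
      rw [abs_of_nonneg (Real.rpow_nonneg (abs_nonneg _) _)]
      exact Real.rpow_le_rpow (abs_nonneg _) (hΦabs x) hp0.le
    · exact ((Real.continuous_rpow_const hp0.le).comp
        (continuous_const.mul hDcont)).intervalIntegrable 0 1
  -- Step C1 (Jensen)
  haveI hprob : IsProbabilityMeasure (volume.restrict (Ioc (0:ℝ) 1)) := by
    constructor
    rw [Measure.restrict_apply_univ, Real.volume_Ioc]
    norm_num
  have hstepC1 : ∀ x : ℝ, D x ^ p ≤ E x := by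
    intro x
    have hD' : D x = ∫ t in (0:ℝ)..1, ω₀ (y*t + (1-y)*x) := by
      rw [aux_subst hωint hy0.ne' ((1-y)*x), hDdef]
    have hE' : E x = ∫ t in (0:ℝ)..1, w (y*t + (1-y)*x) := by
      rw [aux_subst hwint hy0.ne' ((1-y)*x), hEdef]
    have hgint : Integrable (fun t => ω₀ (y*t + (1-y)*x)) (volume.restrict (Ioc (0:ℝ) 1)) :=
      (aux_intervalIntegrable (hω₀meas.comp (haffmeas x)) (fun t => hω₀abs _) 0 1).1
    have hgpint : Integrable ((fun z : ℝ => z ^ p) ∘ (fun t => ω₀ (y*t + (1-y)*x)))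
        (volume.restrict (Ioc (0:ℝ) 1)) :=
      (aux_intervalIntegrable (hwmeas.comp (haffmeas x)) (fun t => hwabs _) 0 1).1
    have jensen := (convexOn_rpow hp).map_integral_le
      (Real.continuous_rpow_const hp0.le).continuousOn isClosed_Ici
      (Filter.Eventually.of_forall (fun t => hω₀nonneg _)) hgint hgpint
    rw [hD', hE', intervalIntegral.integral_of_le zero_le_one,
      intervalIntegral.integral_of_le zero_le_one]
    exact jensen
  have hstepC1' : (∫ x in (0:ℝ)..1, D x ^ p) ≤ ∫ x in (0:ℝ)..1, E x := by
    refine intervalIntegral.integral_mono_on zero_le_one ?_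
      (hEcont.intervalIntegrable 0 1) (fun x _ => hstepC1 x)
    exact ((Real.continuous_rpow_const hp0.le).comp hDcont).intervalIntegrable 0 1
  -- Step C2
  have hPpint : ∀ a b, IntervalIntegrable Pp volume a b := fun a b =>
    hPpcont.intervalIntegrable a b
  have hEint : (∫ x in (0:ℝ)..1, E x)
      = y⁻¹ * ((∫ x in (0:ℝ)..1, Pp (y + (1-y)*x)) - ∫ x in (0:ℝ)..1, Pp ((1-y)*x)) := by
    rw [hEdef]
    rw [intervalIntegral.integral_const_mul]
    rw [intervalIntegral.integral_sub
      (show IntervalIntegrable (fun x => Pp (y + (1-y)*x)) volume 0 1 from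
        (hPpcont.comp haff1).intervalIntegrable 0 1)
      (show IntervalIntegrable (fun x => Pp ((1-y)*x)) volume 0 1 from
        (hPpcont.comp haff2).intervalIntegrable 0 1)]
  have hA : (∫ x in (0:ℝ)..1, Pp (y + (1-y)*x))
      = (1-y)⁻¹ * ((∫ u in (0:ℝ)..1, Pp u) - ∫ u in (0:ℝ)..y, Pp u) := by
    have h := aux_subst hPpint h1y.ne' y
    have hb : 1 - y + y = 1 := by ring
    rw [hb] at h
    rw [← h]
    apply intervalIntegral.integral_congr
    intro x _
    exact congrArg Pp (by ring)
  have hB : (∫ x in (0:ℝ)..1, Pp ((1-y)*x)) = (1-y)⁻¹ * (∫ u in (0:ℝ)..(1-y), Pp u) := by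
    have h := aux_subst hPpint h1y.ne' 0
    have hb : 1 - y + 0 = 1 - y := by ring
    rw [hb, intervalIntegral.integral_same, sub_zero] at h
    rw [← h]
    apply intervalIntegral.integral_congr
    intro x _
    exact congrArg Pp (by ring)
  have hC4 : (∫ u in (0:ℝ)..1, Pp u) - (∫ u in (0:ℝ)..(1-y), Pp u)
      = ∫ v in (0:ℝ)..y, Pp (v + (1-y)) := by
    rw [intervalIntegral.integral_comp_add_right Pp (1-y)]
    have h1 : (0:ℝ) + (1-y) = 1-y := by ring
    have h2 : y + (1-y) = 1 := by ring
    rw [h1, h2]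
    exact intervalIntegral.integral_interval_sub_left (hPpint 0 1) (hPpint 0 (1-y))
  have hkey : (∫ v in (0:ℝ)..y, Pp (v + (1-y))) - (∫ v in (0:ℝ)..y, Pp v)
      ≤ y * (∫ u in (0:ℝ)..1, w u) := by
    rw [← intervalIntegral.integral_sub
      (show IntervalIntegrable (fun v => Pp (v + (1-y))) volume 0 y from
        (hPpcont.comp (continuous_id.add continuous_const)).intervalIntegrable 0 y)
      (hPpint 0 y)]
    have hpt : ∀ v ∈ Icc (0:ℝ) y, Pp (v + (1-y)) - Pp v ≤ ∫ u in (0:ℝ)..1, w u := by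
      intro v hv
      rw [show Pp (v + (1-y)) - Pp v = ∫ u in v..(v + (1-y)), w u from
        intervalIntegral.integral_interval_sub_left (hwint 0 _) (hwint 0 v)]
      exact intervalIntegral.integral_mono_interval hv.1 (by linarith) (by linarith [hv.2])
        (Filter.Eventually.of_forall hwnonneg) (hwint 0 1)
    calc (∫ v in (0:ℝ)..y, (Pp (v + (1-y)) - Pp v))
        ≤ ∫ _ in (0:ℝ)..y, (∫ u in (0:ℝ)..1, w u) := by
          refine intervalIntegral.integral_mono_on hy0.le ?_ intervalIntegrable_const hpt
          exact ((hPpcont.comp (continuous_id.add continuous_const)).sub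
            hPpcont).intervalIntegrable 0 y
      _ = y * (∫ u in (0:ℝ)..1, w u) := by
          rw [intervalIntegral.integral_const, smul_eq_mul, sub_zero]
  have hstepC2 : (∫ x in (0:ℝ)..1, E x) ≤ (1-y)⁻¹ * ∫ u in (0:ℝ)..1, w u := by
    rw [hEint, hA, hB]
    have expand : y⁻¹ * ((1-y)⁻¹ * ((∫ u in (0:ℝ)..1, Pp u) - ∫ u in (0:ℝ)..y, Pp u)
          - (1-y)⁻¹ * (∫ u in (0:ℝ)..(1-y), Pp u))
        = y⁻¹ * (1-y)⁻¹ * (((∫ u in (0:ℝ)..1, Pp u) - (∫ u in (0:ℝ)..(1-y), Pp u))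
          - ∫ u in (0:ℝ)..y, Pp u) := by ring
    rw [expand, hC4]
    calc y⁻¹ * (1-y)⁻¹ * ((∫ v in (0:ℝ)..y, Pp (v + (1-y))) - ∫ u in (0:ℝ)..y, Pp u)
        ≤ y⁻¹ * (1-y)⁻¹ * (y * (∫ u in (0:ℝ)..1, w u)) :=
          mul_le_mul_of_nonneg_left hkey (by positivity)
      _ = (1-y)⁻¹ * ∫ u in (0:ℝ)..1, w u := by field_simp
  -- assemble
  have hC0 : 0 ≤ ∫ u in (0:ℝ)..1, w u :=
    intervalIntegral.integral_nonneg zero_le_one (fun u _ => hwnonneg u)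
  have chain : (∫ x in (0:ℝ)..1, |ρ x - Hop y ρ x| ^ p)
      ≤ (2:ℝ)^p * ((1-y)⁻¹ * ∫ u in (0:ℝ)..1, w u) := by
    have e1 : (∫ x in (0:ℝ)..1, |ρ x - Hop y ρ x| ^ p) = ∫ x in (0:ℝ)..1, |Φ x| ^ p := by
      apply intervalIntegral.integral_congr
      intro x hx
      rw [uIcc_of_le zero_le_one] at hx
      show |ρ x - Hop y ρ x| ^ p = |Φ x| ^ p
      rw [hΦeq x hx]
    have e2 : (∫ x in (0:ℝ)..1, (2 * D x) ^ p) = (2:ℝ)^p * ∫ x in (0:ℝ)..1, D x ^ p := by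
      rw [← intervalIntegral.integral_const_mul]
      apply intervalIntegral.integral_congr
      intro x _
      exact Real.mul_rpow (by norm_num) (hDnonneg x)
    calc (∫ x in (0:ℝ)..1, |ρ x - Hop y ρ x| ^ p) = ∫ x in (0:ℝ)..1, |Φ x| ^ p := e1
      _ ≤ ∫ x in (0:ℝ)..1, (2 * D x) ^ p := hstepB
      _ = (2:ℝ)^p * ∫ x in (0:ℝ)..1, D x ^ p := e2
      _ ≤ (2:ℝ)^p * ((1-y)⁻¹ * ∫ u in (0:ℝ)..1, w u) :=
          mul_le_mul_of_nonneg_left (hstepC1'.trans hstepC2)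
            (Real.rpow_nonneg (by norm_num) p)
  have htau : tau p ρ y = (∫ u in (0:ℝ)..1, w u) ^ (1/p) := by
    rw [tau, _root_.lpNorm]
    congr 1
    apply intervalIntegral.integral_congr
    intro x hx
    rw [uIcc_of_le zero_le_one] at hx
    show |omegaMod ρ x y| ^ p = w x
    rw [abs_of_nonneg (aux_omega_nonneg hM hy0.le hx), hwdef]
    simp only [hω₀def, if_pos hx]
  have hLHS : lpNorm p (fun x => ρ x - Hop y ρ x)
      = (∫ x in (0:ℝ)..1, |ρ x - Hop y ρ x| ^ p) ^ (1/p) := rfl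
  rw [hLHS, htau]
  have hfinal := Real.rpow_le_rpow
    (intervalIntegral.integral_nonneg zero_le_one fun x _ => Real.rpow_nonneg (abs_nonneg _) p)
    chain (by positivity : (0:ℝ) ≤ 1/p)
  refine le_trans hfinal (le_of_eq ?_)
  rw [Real.mul_rpow (Real.rpow_nonneg (by norm_num) p) (by positivity),
    Real.mul_rpow (by positivity) hC0,
    ← Real.rpow_mul (by norm_num : (0:ℝ) ≤ 2), mul_one_div_cancel hp0.ne', Real.rpow_one,
    Real.inv_rpow h1y.le, ← Real.rpow_neg h1y.le]
  ring
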